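/- The completely bounded norm of a homogeneous form p of degree t equals the infimum of ‖T‖_cb over all t-tensors T representing p: ‖p‖_cb = inf { ‖T‖_cb : T(x) = p(x) for all x ∈ ℝ^n }, where the left-hand side is defined via symmetrized decompositions of the unique symmetric tensor T_p. -/

import Mathlib

noncomputable section

/-- `d × d` real matrices, viewed as operators on Euclidean space (with operator norm). -/
abbrev Mat (d : ℕ) := EuclideanSpace ℝ (Fin d) →L[ℝ] EuclideanSpace ℝ (Fin d)

/-- Evaluation of a `t`-tensor as a degree-`t` form: `T(x) = ∑_i T_i x_{i₁}⋯x_{i_t}`. -/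
def tEval {n t : ℕ} (T : (Fin t → Fin n) → ℝ) (x : Fin n → ℝ) : ℝ :=
  ∑ i : Fin t → Fin n, T i * ∏ s, x (i s)

/-- Permutation action on tensors: `(T∘σ)_i = T_{σ(i)}`. -/
def permT {n t : ℕ} (T : (Fin t → Fin n) → ℝ) (σ : Equiv.Perm (Fin t)) :
    (Fin t → Fin n) → ℝ :=
  fun i => T (i ∘ σ)

/-- The completely bounded norm of a `t`-tensor (with `t` contraction-valued maps). -/
def cbNormT {n t : ℕ} (T : (Fin t → Fin n) → ℝ) : ℝ :=
  sSup {c : ℝ | ∃ (d : ℕ) (A : Fin t → Fin n → Mat d),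
    (∀ s j, ‖A s j‖ ≤ 1) ∧
    c = ‖∑ i : Fin t → Fin n, T i • (List.ofFn fun s => A s (i s)).prod‖}

/-! ### Auxiliary combinatorial and polynomial lemmas -/

lemma exists_perm_comp {t n : ℕ} (i i' : Fin t → Fin n)
    (h : ∀ a, (Finset.univ.filter fun s => i s = a).card
        = (Finset.univ.filter fun s => i' s = a).card) :
    ∃ σ : Equiv.Perm (Fin t), i = i' ∘ σ := by
  have hcard : ∀ a, Fintype.card {s // i s = a} = Fintype.card {s // i' s = a} := by
    intro a; simp only [Fintype.card_subtype]; exact h a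
  let e : ∀ a, {s // i s = a} ≃ {s // i' s = a} := fun a => Fintype.equivOfCardEq (hcard a)
  refine ⟨(Equiv.sigmaFiberEquiv i).symm.trans
    ((Equiv.sigmaCongrRight e).trans (Equiv.sigmaFiberEquiv i')), ?_⟩
  funext s
  exact ((e (i s)) ⟨s, rfl⟩).2.symm

/-- The exponent multiset (as a `Finsupp`) of the monomial attached to an index tuple. -/
def mOf {t n : ℕ} (i : Fin t → Fin n) : Fin n →₀ ℕ := ∑ s, Finsupp.single (i s) 1

lemma mOf_apply {t n : ℕ} (i : Fin t → Fin n) (a : Fin n) :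
    mOf i a = (Finset.univ.filter fun s => i s = a).card := by
  rw [mOf, Finset.card_filter, Finsupp.finset_sum_apply]
  refine Finset.sum_congr rfl fun s _ => ?_
  rw [Finsupp.single_apply]

lemma prod_X_eq_monomial' {n t : ℕ} (i : Fin t → Fin n) (F : Finset (Fin t)) :
    (∏ s ∈ F, (MvPolynomial.X (i s) : MvPolynomial (Fin n) ℝ)) =
      MvPolynomial.monomial (∑ s ∈ F, Finsupp.single (i s) 1) 1 := by
  induction F using Finset.induction_on with
  | empty => simp
  | insert _ _ hx ih =>
      rw [Finset.prod_insert hx, Finset.sum_insert hx, ih, MvPolynomial.X,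
        MvPolynomial.monomial_mul, one_mul]

lemma prod_X_eq_monomial {n t : ℕ} (i : Fin t → Fin n) :
    (∏ s, (MvPolynomial.X (i s) : MvPolynomial (Fin n) ℝ)) =
      MvPolynomial.monomial (mOf i) 1 :=
  prod_X_eq_monomial' i Finset.univ

/-- A symmetric tensor whose associated form vanishes identically is zero. -/
lemma sym_eval_eq_zero {n t : ℕ} (S : (Fin t → Fin n) → ℝ)
    (hs : ∀ σ : Equiv.Perm (Fin t), permT S σ = S) (h0 : ∀ x, tEval S x = 0) : S = 0 := by
  set P : MvPolynomial (Fin n) ℝ := ∑ i : Fin t → Fin n, MvPolynomial.monomial (mOf i) (S i)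
    with hPdef
  have heval : ∀ x : Fin n → ℝ, MvPolynomial.eval x P = tEval S x := by
    intro x
    rw [hPdef, map_sum, tEval]
    refine Finset.sum_congr rfl fun i _ => ?_
    have hmon : (MvPolynomial.monomial (mOf i)) (S i)
        = MvPolynomial.C (S i) * ∏ s, (MvPolynomial.X (i s) : MvPolynomial (Fin n) ℝ) := by
      rw [prod_X_eq_monomial, MvPolynomial.C_mul_monomial, mul_one]
    rw [hmon]
    simp
  have hP : P = 0 := MvPolynomial.funext fun x => by rw [heval, h0]; simp
  funext i0
  have hc := congrArg (MvPolynomial.coeff (mOf i0)) hP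
  rw [hPdef, MvPolynomial.coeff_sum] at hc
  simp only [MvPolynomial.coeff_monomial, MvPolynomial.coeff_zero] at hc
  rw [← Finset.sum_filter] at hc
  have hfib : ∀ i ∈ Finset.univ.filter (fun i : Fin t → Fin n => mOf i = mOf i0), S i = S i0 := by
    intro i hi
    rw [Finset.mem_filter] at hi
    obtain ⟨σ, hσ⟩ := exists_perm_comp i i0 (fun a => by
      rw [← mOf_apply, ← mOf_apply, hi.2])
    rw [hσ]
    exact congrFun (hs σ) i0
  rw [Finset.sum_congr rfl hfib, Finset.sum_const, nsmul_eq_mul] at hc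
  have hmem : i0 ∈ Finset.univ.filter (fun i : Fin t → Fin n => mOf i = mOf i0) := by
    simp
  have hcardpos : (0 : ℝ)
      < (Finset.univ.filter (fun i : Fin t → Fin n => mOf i = mOf i0)).card := by
    exact_mod_cast Finset.card_pos.mpr ⟨i0, hmem⟩
  have hS : S i0 = 0 := by
    rcases mul_eq_zero.mp hc with h | h
    · exact absurd h (ne_of_gt hcardpos)
    · exact h
  simpa using hS

/-! ### Auxiliary lemmas about the cb norm -/

/-- The set of values whose supremum defines `cbNormT`. -/
def cbSet {n t : ℕ} (T : (Fin t → Fin n) → ℝ) : Set ℝ :=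
  {c : ℝ | ∃ (d : ℕ) (A : Fin t → Fin n → Mat d),
    (∀ s j, ‖A s j‖ ≤ 1) ∧
    c = ‖∑ i : Fin t → Fin n, T i • (List.ofFn fun s => A s (i s)).prod‖}

lemma cbNormT_eq {n t : ℕ} (T : (Fin t → Fin n) → ℝ) : cbNormT T = sSup (cbSet T) := rfl

lemma norm_listProd_le {d : ℕ} : ∀ (l : List (Mat d)), (∀ a ∈ l, ‖a‖ ≤ 1) → ‖l.prod‖ ≤ 1
  | [], _ => by
      rw [List.prod_nil]
      exact ContinuousLinearMap.norm_id_le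
  | a :: l, h => by
      rw [List.prod_cons]
      calc ‖a * l.prod‖ ≤ ‖a‖ * ‖l.prod‖ := ContinuousLinearMap.opNorm_comp_le a l.prod
        _ ≤ 1 * 1 :=
            mul_le_mul (h a (by simp)) (norm_listProd_le l fun b hb => h b (by simp [hb]))
              (norm_nonneg _) zero_le_one
        _ = 1 := one_mul 1

lemma zero_mem_cbSet {n t : ℕ} (T : (Fin t → Fin n) → ℝ) : (0 : ℝ) ∈ cbSet T := by
  refine ⟨0, fun _ _ => 0, fun s j => by rw [norm_zero]; exact zero_le_one, ?_⟩
  rw [Subsingleton.elim (∑ i : Fin t → Fin n, T i • (List.ofFn fun s => (0 : Mat 0)).prod) 0,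
    norm_zero]

lemma cbSet_bddAbove {n t : ℕ} (T : (Fin t → Fin n) → ℝ) :
    BddAbove (cbSet T) := by
  refine ⟨∑ i : Fin t → Fin n, |T i|, fun c hc => ?_⟩
  obtain ⟨d, A, hA, rfl⟩ := hc
  calc ‖∑ i : Fin t → Fin n, T i • (List.ofFn fun s => A s (i s)).prod‖
      ≤ ∑ i : Fin t → Fin n, ‖T i • (List.ofFn fun s => A s (i s)).prod‖ := norm_sum_le _ _
    _ ≤ ∑ i : Fin t → Fin n, |T i| := by
        refine Finset.sum_le_sum fun i _ => ?_
        calc ‖T i • (List.ofFn fun s => A s (i s)).prod‖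
            = |T i| * ‖(List.ofFn fun s => A s (i s)).prod‖ := by
              have h := norm_smul (T i) ((List.ofFn fun s => A s (i s)).prod)
              rw [Real.norm_eq_abs] at h
              exact h
          _ ≤ |T i| * 1 := by
              refine mul_le_mul_of_nonneg_left ?_ (abs_nonneg _)
              refine norm_listProd_le _ fun b hb => ?_
              obtain ⟨s, rfl⟩ := List.mem_ofFn.mp hb
              exact hA s (i s)
          _ = |T i| := mul_one _

lemma cbNormT_nonneg {n t : ℕ} (T : (Fin t → Fin n) → ℝ) : 0 ≤ cbNormT T :=
  le_csSup (cbSet_bddAbove T) (zero_mem_cbSet T)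

lemma cbNormT_le {n t : ℕ} {T : (Fin t → Fin n) → ℝ} {b : ℝ}
    (hb : ∀ c ∈ cbSet T, c ≤ b) : cbNormT T ≤ b :=
  csSup_le ⟨0, zero_mem_cbSet T⟩ hb

lemma mem_cbSet_le {n t : ℕ} {T : (Fin t → Fin n) → ℝ} {c : ℝ} (h : c ∈ cbSet T) :
    c ≤ cbNormT T := le_csSup (cbSet_bddAbove T) h

lemma cbNormT_add_le {n t : ℕ} (T T' : (Fin t → Fin n) → ℝ) :
    cbNormT (T + T') ≤ cbNormT T + cbNormT T' := by
  refine cbNormT_le fun c hc => ?_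
  obtain ⟨d, A, hA, rfl⟩ := hc
  have hsplit : ∑ i : Fin t → Fin n, (T + T') i • (List.ofFn fun s => A s (i s)).prod
      = (∑ i : Fin t → Fin n, T i • (List.ofFn fun s => A s (i s)).prod)
        + ∑ i : Fin t → Fin n, T' i • (List.ofFn fun s => A s (i s)).prod := by
    rw [← Finset.sum_add_distrib]
    exact Finset.sum_congr rfl fun i _ =>
      ContinuousLinearMap.ext fun v => by simp [add_smul]
  rw [hsplit]
  exact (norm_add_le _ _).trans
    (add_le_add (mem_cbSet_le ⟨d, A, hA, rfl⟩) (mem_cbSet_le ⟨d, A, hA, rfl⟩))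

lemma cbNormT_zero {n t : ℕ} : cbNormT (0 : (Fin t → Fin n) → ℝ) = 0 := by
  refine le_antisymm (cbNormT_le fun c hc => ?_) (cbNormT_nonneg _)
  obtain ⟨d, A, hA, rfl⟩ := hc
  have h0 : ∑ i : Fin t → Fin n, (0 : (Fin t → Fin n) → ℝ) i • (List.ofFn fun s => A s (i s)).prod
      = 0 := Finset.sum_eq_zero fun i _ => by
        rw [Pi.zero_apply]
        exact zero_smul ℝ ((List.ofFn fun s => A s (i s)).prod)
  rw [h0, norm_zero]

lemma cbNormT_sum_le {n t : ℕ} {ι : Type*} (s : Finset ι) (f : ι → ((Fin t → Fin n) → ℝ)) :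
    cbNormT (∑ a ∈ s, f a) ≤ ∑ a ∈ s, cbNormT (f a) := by
  classical
  induction s using Finset.induction_on with
  | empty => simp [cbNormT_zero]
  | insert _ _ hx ih =>
      rw [Finset.sum_insert hx, Finset.sum_insert hx]
      exact (cbNormT_add_le _ _).trans (add_le_add_right ih _)

lemma smul_sum_eq {n t d : ℕ} (c : ℝ) (T : (Fin t → Fin n) → ℝ) (A : Fin t → Fin n → Mat d) :
    ∑ i : Fin t → Fin n, (c • T) i • (List.ofFn fun s => A s (i s)).prod
      = c • ∑ i : Fin t → Fin n, T i • (List.ofFn fun s => A s (i s)).prod := by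
  rw [Finset.smul_sum]
  exact Finset.sum_congr rfl fun i _ => by
    have h : (c • T) i = c * T i := rfl
    rw [h]
    exact (smul_smul c (T i) _).symm

lemma cbNormT_smul {n t : ℕ} (c : ℝ) (hc : 0 < c) (T : (Fin t → Fin n) → ℝ) :
    cbNormT (c • T) = c * cbNormT T := by
  have key : ∀ (d : ℕ) (A : Fin t → Fin n → Mat d),
      ‖∑ i : Fin t → Fin n, (c • T) i • (List.ofFn fun s => A s (i s)).prod‖
        = c * ‖∑ i : Fin t → Fin n, T i • (List.ofFn fun s => A s (i s)).prod‖ := by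
    intro d A
    rw [smul_sum_eq c T A]
    calc ‖c • ∑ i : Fin t → Fin n, T i • (List.ofFn fun s => A s (i s)).prod‖
        = |c| * ‖∑ i : Fin t → Fin n, T i • (List.ofFn fun s => A s (i s)).prod‖ := by
          have h := norm_smul c (∑ i : Fin t → Fin n, T i • (List.ofFn fun s => A s (i s)).prod)
          rw [Real.norm_eq_abs] at h
          exact h
      _ = c * ‖∑ i : Fin t → Fin n, T i • (List.ofFn fun s => A s (i s)).prod‖ := by
          rw [abs_of_pos hc]
  refine le_antisymm (cbNormT_le fun e he => ?_) ?_
  · obtain ⟨d, A, hA, rfl⟩ := he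
    rw [key d A]
    exact mul_le_mul_of_nonneg_left (mem_cbSet_le ⟨d, A, hA, rfl⟩) hc.le
  · have h1 : cbNormT T ≤ c⁻¹ * cbNormT (c • T) := by
      refine cbNormT_le fun e he => ?_
      obtain ⟨d, A, hA, rfl⟩ := he
      have hmem : c * ‖∑ i : Fin t → Fin n, T i • (List.ofFn fun s => A s (i s)).prod‖
          ≤ cbNormT (c • T) := by
        refine mem_cbSet_le ⟨d, A, hA, ?_⟩
        rw [key d A]
      calc ‖∑ i : Fin t → Fin n, T i • (List.ofFn fun s => A s (i s)).prod‖
          = c⁻¹ * (c * ‖∑ i : Fin t → Fin n, T i • (List.ofFn fun s => A s (i s)).prod‖) := by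
            rw [← mul_assoc, inv_mul_cancel₀ hc.ne', one_mul]
        _ ≤ c⁻¹ * cbNormT (c • T) :=
            mul_le_mul_of_nonneg_left hmem (inv_nonneg.mpr hc.le)
    calc c * cbNormT T ≤ c * (c⁻¹ * cbNormT (c • T)) := mul_le_mul_of_nonneg_left h1 hc.le
      _ = cbNormT (c • T) := by rw [← mul_assoc, mul_inv_cancel₀ hc.ne', one_mul]

/-! ### Lemmas about `tEval` and `permT` -/

lemma tEval_perm {n t : ℕ} (S : (Fin t → Fin n) → ℝ) (σ : Equiv.Perm (Fin t))
    (x : Fin n → ℝ) : tEval (permT S σ) x = tEval S x := by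
  rw [tEval, tEval]
  refine Fintype.sum_bijective (fun i => i ∘ σ)
    (⟨fun i : Fin t → Fin n => i ∘ σ, fun i => i ∘ σ.symm,
      fun i => by funext s; simp, fun i => by funext s; simp⟩ : _ ≃ _).bijective
    _ _ (fun i => ?_)
  have hprod : (∏ s, x (i (σ s))) = ∏ s, x (i s) := Equiv.prod_comp σ fun s => x (i s)
  rw [permT]
  simp only [Function.comp]
  rw [hprod]

lemma tEval_sum {n t : ℕ} {ι : Type*} (s : Finset ι) (f : ι → ((Fin t → Fin n) → ℝ))
    (x : Fin n → ℝ) : tEval (∑ a ∈ s, f a) x = ∑ a ∈ s, tEval (f a) x := by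
  rw [tEval]
  simp only [Finset.sum_apply, Finset.sum_mul]
  rw [Finset.sum_comm]
  exact Finset.sum_congr rfl fun a _ => rfl

lemma permT_sum {n t : ℕ} {ι : Type*} (s : Finset ι) (f : ι → ((Fin t → Fin n) → ℝ))
    (σ : Equiv.Perm (Fin t)) : permT (∑ a ∈ s, f a) σ = ∑ a ∈ s, permT (f a) σ := by
  funext i
  simp only [permT, Finset.sum_apply]

lemma permT_perm {n t : ℕ} (S : (Fin t → Fin n) → ℝ) (σ τ : Equiv.Perm (Fin t)) :
    permT (permT S τ) σ = permT S (σ * τ) := rfl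

/-- Symmetrization identity: if `T` represents the same form as the symmetric tensor `Tp`,
then the sum of all permuted copies of `T` is `t! • Tp`. -/
lemma perm_sum_eq_factorial_smul {n t : ℕ} (Tp T : (Fin t → Fin n) → ℝ)
    (hsym : ∀ σ : Equiv.Perm (Fin t), permT Tp σ = Tp)
    (h : ∀ x, tEval T x = tEval Tp x) :
    ∑ σ : Equiv.Perm (Fin t), permT T σ = ((t.factorial : ℝ)) • Tp := by
  have hcard : Fintype.card (Equiv.Perm (Fin t)) = t.factorial := by
    rw [Fintype.card_perm, Fintype.card_fin]
  set D : (Fin t → Fin n) → ℝ :=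
    (∑ σ : Equiv.Perm (Fin t), permT T σ) - ((t.factorial : ℝ)) • Tp with hD
  have hDsym : ∀ σ0 : Equiv.Perm (Fin t), permT D σ0 = D := by
    intro σ0
    have h1 : permT (∑ σ : Equiv.Perm (Fin t), permT T σ) σ0
        = ∑ σ : Equiv.Perm (Fin t), permT T σ := by
      rw [permT_sum]
      have h2 : ∀ σ : Equiv.Perm (Fin t), permT (permT T σ) σ0 = permT T (σ0 * σ) :=
        fun σ => permT_perm T σ0 σ
      rw [Finset.sum_congr rfl fun σ _ => h2 σ]
      exact Fintype.sum_equiv (Equiv.mulLeft σ0) _ _ (fun σ => rfl)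
    have h3 : permT (((t.factorial : ℝ)) • Tp) σ0 = ((t.factorial : ℝ)) • Tp := by
      funext i
      have : permT (((t.factorial : ℝ)) • Tp) σ0 i = (t.factorial : ℝ) * Tp (i ∘ σ0) := rfl
      rw [this]
      have h4 : Tp (i ∘ σ0) = Tp i := congrFun (hsym σ0) i
      rw [h4]
      rfl
    funext i
    have hDi : permT D σ0 i = permT (∑ σ : Equiv.Perm (Fin t), permT T σ) σ0 i
        - permT (((t.factorial : ℝ)) • Tp) σ0 i := rfl
    rw [hDi, h1, h3]
    rfl
  have hD0 : ∀ x, tEval D x = 0 := by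
    intro x
    have hsub : tEval D x = tEval (∑ σ : Equiv.Perm (Fin t), permT T σ) x
        - tEval (((t.factorial : ℝ)) • Tp) x := by
      rw [tEval, tEval, tEval, ← Finset.sum_sub_distrib]
      exact Finset.sum_congr rfl fun i _ => by
        have : D i = (∑ σ : Equiv.Perm (Fin t), permT T σ) i
            - (((t.factorial : ℝ)) • Tp) i := rfl
        rw [this, sub_mul]
    have hsmul : tEval (((t.factorial : ℝ)) • Tp) x = (t.factorial : ℝ) * tEval Tp x := by
      rw [tEval, tEval, Finset.mul_sum]
      exact Finset.sum_congr rfl fun i _ => by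
        have : (((t.factorial : ℝ)) • Tp) i = (t.factorial : ℝ) * Tp i := rfl
        rw [this, mul_assoc]
    rw [hsub, hsmul, tEval_sum]
    have : ∀ σ ∈ (Finset.univ : Finset (Equiv.Perm (Fin t))),
        tEval (permT T σ) x = tEval Tp x := fun σ _ => by rw [tEval_perm, h x]
    rw [Finset.sum_congr rfl this, Finset.sum_const, Finset.card_univ, hcard,
      nsmul_eq_mul, sub_self]
  have := sym_eval_eq_zero D hDsym hD0
  rw [hD] at this
  exact sub_eq_zero.mp this

/-! ### The main theorem -/

/-- The completely bounded norm of a degree-`t` form, defined via symmetrized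
decompositions of its unique symmetric tensor `T_p`, equals the infimum of `‖T‖_cb`
over all tensors `T` representing the form. -/
theorem cb_norm_form_eq_inf_tensor (n t : ℕ) (Tp : (Fin t → Fin n) → ℝ)
    (hsym : ∀ σ : Equiv.Perm (Fin t), permT Tp σ = Tp) :
    sInf {c : ℝ | ∃ Ts : Equiv.Perm (Fin t) → ((Fin t → Fin n) → ℝ),
        (∑ σ : Equiv.Perm (Fin t), permT (Ts σ) σ) = Tp ∧
        c = ∑ σ : Equiv.Perm (Fin t), cbNormT (Ts σ)} =
    sInf {c : ℝ | ∃ T : (Fin t → Fin n) → ℝ,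
        (∀ x : Fin n → ℝ, tEval T x = tEval Tp x) ∧ c = cbNormT T} := by
  set A : Set ℝ := {c : ℝ | ∃ Ts : Equiv.Perm (Fin t) → ((Fin t → Fin n) → ℝ),
      (∑ σ : Equiv.Perm (Fin t), permT (Ts σ) σ) = Tp ∧
      c = ∑ σ : Equiv.Perm (Fin t), cbNormT (Ts σ)} with hAdef
  set B : Set ℝ := {c : ℝ | ∃ T : (Fin t → Fin n) → ℝ,
      (∀ x : Fin n → ℝ, tEval T x = tEval Tp x) ∧ c = cbNormT T} with hBdef
  have hk : (0 : ℝ) < (t.factorial : ℝ) := by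
    exact_mod_cast t.factorial_pos
  have hcard : Fintype.card (Equiv.Perm (Fin t)) = t.factorial := by
    rw [Fintype.card_perm, Fintype.card_fin]
  -- helper: a representing tensor yields a decomposition of the same total cb norm
  have helper : ∀ T : (Fin t → Fin n) → ℝ, (∀ x, tEval T x = tEval Tp x) →
      ∃ Ts : Equiv.Perm (Fin t) → ((Fin t → Fin n) → ℝ),
        (∑ σ : Equiv.Perm (Fin t), permT (Ts σ) σ) = Tp ∧
        (∑ σ : Equiv.Perm (Fin t), cbNormT (Ts σ)) = cbNormT T := by
    intro T hT
    refine ⟨fun _ => ((t.factorial : ℝ))⁻¹ • T, ?_, ?_⟩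
    · have h1 : ∀ σ : Equiv.Perm (Fin t),
          permT (((t.factorial : ℝ))⁻¹ • T) σ = ((t.factorial : ℝ))⁻¹ • permT T σ :=
        fun σ => rfl
      rw [Finset.sum_congr rfl fun σ _ => h1 σ, ← Finset.smul_sum,
        perm_sum_eq_factorial_smul Tp T hsym hT, smul_smul,
        inv_mul_cancel₀ hk.ne', one_smul]
    · rw [Finset.sum_const, Finset.card_univ, hcard, nsmul_eq_mul,
        cbNormT_smul _ (inv_pos.mpr hk) T, ← mul_assoc, mul_inv_cancel₀ hk.ne', one_mul]
  have hAne : A.Nonempty := by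
    obtain ⟨Ts, h1, h2⟩ := helper Tp (fun x => rfl)
    exact ⟨∑ σ : Equiv.Perm (Fin t), cbNormT (Ts σ), Ts, h1, rfl⟩
  have hBne : B.Nonempty := ⟨cbNormT Tp, Tp, fun x => rfl, rfl⟩
  have hAbdd : BddBelow A := by
    refine ⟨0, fun c hc => ?_⟩
    obtain ⟨Ts, _, rfl⟩ := hc
    exact Finset.sum_nonneg fun σ _ => cbNormT_nonneg (Ts σ)
  have hBbdd : BddBelow B := by
    refine ⟨0, fun c hc => ?_⟩
    obtain ⟨T, _, rfl⟩ := hc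
    exact cbNormT_nonneg T
  refine le_antisymm ?_ ?_
  · -- sInf A ≤ sInf B
    refine le_csInf hBne ?_
    rintro c ⟨T, hT, rfl⟩
    obtain ⟨Ts, h1, h2⟩ := helper T hT
    have : (∑ σ : Equiv.Perm (Fin t), cbNormT (Ts σ)) ∈ A := ⟨Ts, h1, rfl⟩
    calc sInf A ≤ ∑ σ : Equiv.Perm (Fin t), cbNormT (Ts σ) := csInf_le hAbdd this
      _ = cbNormT T := h2
  · -- sInf B ≤ sInf A
    refine le_csInf hAne ?_
    rintro c ⟨Ts, h1, rfl⟩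
    have heval : ∀ x, tEval (∑ σ : Equiv.Perm (Fin t), Ts σ) x = tEval Tp x := by
      intro x
      rw [tEval_sum, ← h1, tEval_sum]
      exact Finset.sum_congr rfl fun σ _ => (tEval_perm (Ts σ) σ x).symm
    have hmemB : cbNormT (∑ σ : Equiv.Perm (Fin t), Ts σ) ∈ B :=
      ⟨∑ σ : Equiv.Perm (Fin t), Ts σ, heval, rfl⟩
    calc sInf B ≤ cbNormT (∑ σ : Equiv.Perm (Fin t), Ts σ) := csInf_le hBbdd hmemB
      _ ≤ ∑ σ : Equiv.Perm (Fin t), cbNormT (Ts σ) := cbNormT_sum_le _ _
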